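/- Let Λ be a countable finitely aligned category of paths and let μ, ν ∈ Λ with μ ≠ ν, s(μ) = s(ν), and r(μ) = r(ν). The following are equivalent: (a) μτ ⋔ ν for every τ ∈ s(μ)Λ (i.e., (μ,ν) is a generalized cycle); (b) the set {σ^μ(ε) : ε ∈ μ ∨ ν} is exhaustive in s(μ)Λ; (c) {μx : x ∈ s(μ)∂Λ} ⊆ {νx : x ∈ s(ν)∂Λ}, where s(μ)∂Λ = ∂Λ ∩ s(μ)Λ*. -/

import Mathlib

universe u v

/-- A category of paths: a small category (objects identified with identity
morphisms) with left and right cancellation and no inverses. -/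
structure CategoryOfPaths (Λ : Type u) where
  s : Λ → Λ
  r : Λ → Λ
  comp : Λ → Λ → Λ
  s_comp : ∀ {α β : Λ}, s α = r β → s (comp α β) = s β
  r_comp : ∀ {α β : Λ}, s α = r β → r (comp α β) = r α
  comp_assoc : ∀ {α β γ : Λ}, s α = r β → s β = r γ →
    comp (comp α β) γ = comp α (comp β γ)
  id_comp : ∀ α : Λ, comp (r α) α = α
  comp_id : ∀ α : Λ, comp α (s α) = α
  s_r : ∀ α : Λ, s (r α) = r α
  r_r : ∀ α : Λ, r (r α) = r α
  r_s : ∀ α : Λ, r (s α) = s α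
  s_s : ∀ α : Λ, s (s α) = s α
  left_cancel : ∀ {α β γ : Λ}, s α = r β → s α = r γ → comp α β = comp α γ → β = γ
  right_cancel : ∀ {β γ α : Λ}, s β = r α → s γ = r α → comp β α = comp γ α → β = γ
  no_inverses : ∀ {α β : Λ}, s α = r β → comp α β = s β → α = s β ∧ β = s β

variable {Λ : Type u}

/-- The tail set `αΛ`. -/
def pTail (C : CategoryOfPaths Λ) (α : Λ) : Set Λ :=
  {x | ∃ β, C.s α = C.r β ∧ x = C.comp α β}

/-- `vΛ`, the paths with range `v`. -/
def pRng (C : CategoryOfPaths Λ) (w : Λ) : Set Λ := {α | C.r α = w}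

/-- `Λv`, the paths with source `v`. -/
def pSrc (C : CategoryOfPaths Λ) (w : Λ) : Set Λ := {α | C.s α = w}

/-- `[β]`, the initial segments of `β`. -/
def pSeg (C : CategoryOfPaths Λ) (β : Λ) : Set Λ := {α | β ∈ pTail C α}

/-- `α ⋔ β`. -/
def pMeets (C : CategoryOfPaths Λ) (α β : Λ) : Prop :=
  (pTail C α ∩ pTail C β).Nonempty

/-- `αE`. -/
def pMulSet (C : CategoryOfPaths Λ) (α : Λ) (E : Set Λ) : Set Λ :=
  {x | ∃ β ∈ E, C.s α = C.r β ∧ x = C.comp α β}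

/-- `σ^α(E ∩ αΛ)`, computed inside an ambient subcategory `S`. -/
def pShiftIn (C : CategoryOfPaths Λ) (S : Set Λ) (α : Λ) (E : Set Λ) : Set Λ :=
  {β | β ∈ S ∧ C.s α = C.r β ∧ C.comp α β ∈ E}

/-- `σ^α(E ∩ αΛ)`. -/
def pShift (C : CategoryOfPaths Λ) (α : Λ) (E : Set Λ) : Set Λ :=
  {β | C.s α = C.r β ∧ C.comp α β ∈ E}

/-- `⋁F`: the minimal common extensions of `F`. -/
def pMinExt (C : CategoryOfPaths Λ) (F : Set Λ) : Set Λ :=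
  {ε | (∀ α ∈ F, ε ∈ pTail C α) ∧
    ∀ γ, (∀ α ∈ F, γ ∈ pTail C α) → ε ∈ pTail C γ → γ = ε}

/-- `α ∨ β`: the minimal common extensions of `α` and `β`. -/
def pMinCE (C : CategoryOfPaths Λ) (α β : Λ) : Set Λ := pMinExt C {α, β}

/-- A subcategory of a category of paths, as a set of morphisms. -/
structure IsSubcategory (C : CategoryOfPaths Λ) (Λ₀ : Set Λ) : Prop where
  comp_mem : ∀ {α β : Λ}, α ∈ Λ₀ → β ∈ Λ₀ → C.s α = C.r β → C.comp α β ∈ Λ₀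
  s_mem : ∀ {α : Λ}, α ∈ Λ₀ → C.s α ∈ Λ₀
  r_mem : ∀ {α : Λ}, α ∈ Λ₀ → C.r α ∈ Λ₀

/-- A finitely aligned category of paths. -/
def FinitelyAligned (C : CategoryOfPaths Λ) : Prop :=
  ∀ α β : Λ, ∃ G : Set Λ, G.Finite ∧
    pTail C α ∩ pTail C β = ⋃ ε ∈ G, pTail C ε

/-- A finitely aligned relative category of paths `(Λ₀, Λ)`. -/
def RelFinitelyAligned (C : CategoryOfPaths Λ) (Λ₀ : Set Λ) : Prop :=
  (∀ α ∈ Λ₀, ∀ β ∈ Λ₀, ∃ G : Set Λ, G.Finite ∧ G ⊆ Λ₀ ∧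
      pTail C α ∩ pTail C β = ⋃ ε ∈ G, pTail C ε) ∧
  (∀ α ∈ Λ₀, pTail C α ∩ Λ₀ = pMulSet C α Λ₀)

/-- A ring of sets: contains `∅` and is closed under `∪`, `∩`, and `\`. -/
def IsSetRing {γ : Type v} (R : Set (Set γ)) : Prop :=
  ∅ ∈ R ∧ (∀ E ∈ R, ∀ F ∈ R, E ∪ F ∈ R) ∧ (∀ E ∈ R, ∀ F ∈ R, E ∩ F ∈ R) ∧
    (∀ E ∈ R, ∀ F ∈ R, E \ F ∈ R)

/-- A ring of sets on `S`: a ring of sets all of whose members are subsets of `S`. -/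
def IsSetRingOn {γ : Type v} (S : Set γ) (R : Set (Set γ)) : Prop :=
  IsSetRing R ∧ ∀ E ∈ R, E ⊆ S

/-- The ring of sets generated by a collection. -/
def setRingGen {γ : Type v} (G : Set (Set γ)) : Set (Set γ) :=
  ⋂₀ {R | IsSetRing R ∧ G ⊆ R}

/-- The ring of sets on `S` generated by a collection. -/
def setRingGenOn {γ : Type v} (S : Set γ) (G : Set (Set γ)) : Set (Set γ) :=
  ⋂₀ {R | IsSetRingOn S R ∧ G ⊆ R}

/-- A zigzag: a list of pairs `(αᵢ, βᵢ)` with `r αᵢ = r βᵢ` and `s αᵢ₊₁ = s βᵢ`. -/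
def IsZigzag (C : CategoryOfPaths Λ) (l : List (Λ × Λ)) : Prop :=
  (∀ p ∈ l, C.r p.1 = C.r p.2) ∧ l.Chain' (fun p q => C.s q.1 = C.s p.2)

/-- The (graph of the) zigzag map `φ_ζ = σ^{α₁} β₁ ⋯ σ^{αₙ} βₙ`, computed
inside an ambient subcategory `S`. -/
def zigzagRelIn (C : CategoryOfPaths Λ) (S : Set Λ) : List (Λ × Λ) → Λ → Λ → Prop
  | [], x, y => x = y ∧ x ∈ S
  | p :: rest, x, y => ∃ z, zigzagRelIn C S rest x z ∧ C.s p.2 = C.r z ∧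
      C.s p.1 = C.r y ∧ y ∈ S ∧ C.comp p.2 z = C.comp p.1 y

/-- `A(ζ)`: the domain of the zigzag map. -/
def zigzagDomIn (C : CategoryOfPaths Λ) (S : Set Λ) (l : List (Λ × Λ)) : Set Λ :=
  {x | ∃ y, zigzagRelIn C S l x y}

/-- `𝒟(Λ₀,Λ)⁰_v`: nonempty zigzag sets with entries in `Λ₀` and source `v`,
computed inside the ambient subcategory `S`. -/
def relD0 (C : CategoryOfPaths Λ) (Λ₀ S : Set Λ) (w : Λ) : Set (Set Λ) :=
  {E | E.Nonempty ∧ ∃ (l : List (Λ × Λ)) (h : l ≠ []),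
    IsZigzag C l ∧ (∀ p ∈ l, p.1 ∈ Λ₀ ∧ p.2 ∈ Λ₀) ∧
    C.s (l.getLast h).2 = w ∧ E = zigzagDomIn C S l}

/-- `𝒜(Λ₀,Λ)_v`: the ring of sets generated by the zigzag sets. -/
def relAring (C : CategoryOfPaths Λ) (Λ₀ S : Set Λ) (w : Λ) : Set (Set Λ) :=
  setRingGenOn {α | α ∈ S ∧ C.r α = w} (relD0 C Λ₀ S w)

/-- A filter in a ring of sets. -/
def IsFilterIn {γ : Type v} (R U : Set (Set γ)) : Prop :=
  U.Nonempty ∧ U ⊆ R ∧ (∀ E ∈ U, E.Nonempty) ∧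
    (∀ E ∈ U, ∀ F ∈ U, E ∩ F ∈ U) ∧ (∀ E ∈ U, ∀ F ∈ R, E ⊆ F → F ∈ U)

/-- An ultrafilter in a ring of sets: a maximal filter. -/
def IsUltrafilterIn {γ : Type v} (R U : Set (Set γ)) : Prop :=
  IsFilterIn R U ∧ ∀ V, IsFilterIn R V → U ⊆ V → V = U

/-- A filter base in a ring of sets. -/
def IsFilterBaseIn {γ : Type v} (R B : Set (Set γ)) : Prop :=
  B.Nonempty ∧ B ⊆ R ∧ (∀ E ∈ B, E.Nonempty) ∧
    ∀ E ∈ B, ∀ F ∈ B, ∃ G ∈ B, G ⊆ E ∩ F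

/-- The filter generated by a filter base. -/
def filterGenBy {γ : Type v} (R B : Set (Set γ)) : Set (Set γ) :=
  {E | E ∈ R ∧ ∃ F ∈ B, F ⊆ E}

/-- An ultrafilter base in a ring of sets. -/
def IsUltrafilterBaseIn {γ : Type v} (R B : Set (Set γ)) : Prop :=
  IsFilterBaseIn R B ∧ IsUltrafilterIn R (filterGenBy R B)

/-- A Boolean ring homomorphism defined on a ring of sets `A` with values in a
generalized Boolean algebra. -/
def IsBRHomOn {γ : Type v} {R : Type*} [GeneralizedBooleanAlgebra R]
    (A : Set (Set γ)) (ν : Set γ → R) : Prop :=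
  ν ∅ = ⊥ ∧ (∀ E ∈ A, ∀ F ∈ A, ν (E ∪ F) = ν E ⊔ ν F) ∧
    (∀ E ∈ A, ∀ F ∈ A, ν (E ∩ F) = ν E ⊓ ν F) ∧
    (∀ E ∈ A, ∀ F ∈ A, ν (E \ F) = ν E \ ν F)

/-- `𝒜_v`: the ring of sets on `vΛ` generated by the tail sets. -/
def tailRing (C : CategoryOfPaths Λ) (w : Λ) : Set (Set Λ) :=
  setRingGenOn (pRng C w) {E | ∃ α, C.r α = w ∧ E = pTail C α}

/-- A directed subset. -/
def pDirected (C : CategoryOfPaths Λ) (x : Set Λ) : Prop :=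
  ∀ α ∈ x, ∀ β ∈ x, (pTail C α ∩ pTail C β ∩ x).Nonempty

/-- A hereditary subset. -/
def pHereditary (C : CategoryOfPaths Λ) (x : Set Λ) : Prop :=
  ∀ γ ∈ x, ∀ α : Λ, γ ∈ pTail C α → α ∈ x

/-- `vΛ*`: the nonempty directed hereditary subsets of `vΛ`. -/
def lamStar (C : CategoryOfPaths Λ) (w : Λ) : Set (Set Λ) :=
  {x | x.Nonempty ∧ x ⊆ pRng C w ∧ pDirected C x ∧ pHereditary C x}

/-- `vΛ**`: the maximal directed subsets of `vΛ`. -/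
def lamStarStar (C : CategoryOfPaths Λ) (w : Λ) : Set (Set Λ) :=
  {x | x ⊆ pRng C w ∧ pDirected C x ∧
    ∀ y, y ⊆ pRng C w → pDirected C y → x ⊆ y → y = x}

/-- `αx = ⋃_{γ ∈ x} [αγ]` for `x ∈ s(α)Λ*`. -/
def pMulStar (C : CategoryOfPaths Λ) (α : Λ) (x : Set Λ) : Set Λ :=
  {δ | ∃ γ ∈ x, C.s α = C.r γ ∧ C.comp α γ ∈ pTail C δ}

/-- `𝒰_{C,0}`. -/
def UC0 (C : CategoryOfPaths Λ) (w : Λ) (x : Set Λ) : Set (Set Λ) :=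
  {E | E ∈ tailRing C w ∧ ∃ α ∈ x, pTail C α ⊆ E}

/-- `𝒰_C`. -/
def UC (C : CategoryOfPaths Λ) (w : Λ) (x : Set Λ) : Set (Set Λ) :=
  {E | E ∈ tailRing C w ∧ ∃ α ∈ x, x ∩ pTail C α ⊆ E}

/-- `X_v = vΛ*` as a type. -/
abbrev Xv (C : CategoryOfPaths Λ) (w : Λ) : Type u := {x : Set Λ // x ∈ lamStar C w}

/-- The topology on `X_v` generated by the sets `Ê`, `E ∈ 𝒜_v`. -/
def XvTop (C : CategoryOfPaths Λ) (w : Λ) : TopologicalSpace (Xv C w) :=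
  TopologicalSpace.generateFrom
    {t | ∃ E ∈ tailRing C w, t = {x : Xv C w | E ∈ UC C w x.1}}

/-- The vertices of `Λ`. -/
abbrev Vertex (C : CategoryOfPaths Λ) : Type u := {w : Λ // C.r w = w}

/-- `X`: the disjoint union of the spaces `X_v`. -/
abbrev Xtotal (C : CategoryOfPaths Λ) : Type u := Σ w : Vertex C, Xv C w.1

/-- The disjoint union topology on `X`. -/
def XtotalTop (C : CategoryOfPaths Λ) : TopologicalSpace (Xtotal C) :=
  letI : ∀ w : Vertex C, TopologicalSpace (Xv C w.1) := fun w => XvTop C w.1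
  inferInstance

/-- The boundary `∂Λ`: the closure of `Λ**` in `X`. -/
def boundarySet (C : CategoryOfPaths Λ) : Set (Xtotal C) :=
  @closure _ (XtotalTop C) {p : Xtotal C | p.2.1 ∈ lamStarStar C p.1.1}

/-- An exhaustive subset of `vΛ`. -/
def ExhaustiveAt (C : CategoryOfPaths Λ) (w : Λ) (F : Set Λ) : Prop :=
  ∀ α, C.r α = w → ∃ β ∈ F, pMeets C α β

/-- An aperiodic point of `Λ*`. -/
def pAperiodic (C : CategoryOfPaths Λ) (x : Set Λ) : Prop :=
  ∀ α ∈ x, ∀ β ∈ x, α ≠ β → pShift C α x ≠ pShift C β x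

/-- A right-aperiodic point of `wΛ*`. -/
def pRightAperiodicAt (C : CategoryOfPaths Λ) (w : Λ) (x : Set Λ) : Prop :=
  ∀ α β : Λ, C.s α = w → C.s β = w → α ≠ β → pMulStar C α x ≠ pMulStar C β x

/-- The triples `(α, β, x)` with `s α = s β` and `x ∈ s(α)Λ*`. -/
abbrev pTrip (C : CategoryOfPaths Λ) : Type u :=
  {t : Λ × Λ × Set Λ // C.s t.1 = C.s t.2.1 ∧ t.2.2 ∈ lamStar C (C.s t.1)}

/-- The groupoid equivalence relation on triples. -/
def tripRel (C : CategoryOfPaths Λ) (t t' : pTrip C) : Prop :=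
  ∃ (z : Set Λ) (δ δ' : Λ),
    z ∈ lamStar C (C.s δ) ∧ z ∈ lamStar C (C.s δ') ∧
    C.s t.1.1 = C.r δ ∧ C.s t'.1.1 = C.r δ' ∧
    t.1.2.2 = pMulStar C δ z ∧ t'.1.2.2 = pMulStar C δ' z ∧
    C.comp t.1.1 δ = C.comp t'.1.1 δ' ∧
    C.comp t.1.2.1 δ = C.comp t'.1.2.1 δ'

/-- The ultrafilter space of `𝒜(Λ₀,Λ)_v`. -/
abbrev relXv (C : CategoryOfPaths Λ) (Λ₀ : Set Λ) (w : Λ) : Type u :=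
  {U : Set (Set Λ) // IsUltrafilterIn (relAring C Λ₀ Set.univ w) U}

/-- The topology on the ultrafilter space of `𝒜(Λ₀,Λ)_v` generated by the `Ê`. -/
def relXvTop (C : CategoryOfPaths Λ) (Λ₀ : Set Λ) (w : Λ) :
    TopologicalSpace (relXv C Λ₀ w) :=
  TopologicalSpace.generateFrom
    {t | ∃ E ∈ relAring C Λ₀ Set.univ w, t = {U : relXv C Λ₀ w | E ∈ U.1}}

/-! ### Auxiliary development for Statement 18 -/

section Aux

variable {C : CategoryOfPaths Λ}

namespace CatPathsAux

/-- `α ∈ αΛ`. -/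
theorem mem_pTail_self (C : CategoryOfPaths Λ) (α : Λ) : α ∈ pTail C α :=
  ⟨C.s α, (C.r_s α).symm, (C.comp_id α).symm⟩

theorem r_eq_of_mem_pTail {α δ : Λ} (h : δ ∈ pTail C α) : C.r δ = C.r α := by
  obtain ⟨β, h1, rfl⟩ := h; exact C.r_comp h1

theorem pTail_subset {α δ : Λ} (h : δ ∈ pTail C α) : pTail C δ ⊆ pTail C α := by
  obtain ⟨β, h1, rfl⟩ := h
  rintro x ⟨γ, h2, rfl⟩
  have hs : C.s β = C.r γ := by rwa [C.s_comp h1] at h2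
  exact ⟨C.comp β γ, by rw [C.r_comp hs]; exact h1, C.comp_assoc h1 hs⟩

theorem pTail_trans {α δ ζ : Λ} (h : δ ∈ pTail C α) (h2 : ζ ∈ pTail C δ) :
    ζ ∈ pTail C α := pTail_subset h h2

/-- Antisymmetry of the extension order. -/
theorem pTail_antisymm {α δ : Λ} (h : δ ∈ pTail C α) (h' : α ∈ pTail C δ) : α = δ := by
  obtain ⟨a, ha, rfl⟩ := h
  obtain ⟨b, hb, hab⟩ := h'
  -- α = comp (comp α a) b
  have hsab : C.s a = C.r b := by rwa [C.s_comp ha] at hb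
  have h3 : C.comp α (C.comp a b) = C.comp α (C.s α) := by
    rw [← C.comp_assoc ha hsab, ← hab, C.comp_id]
  have h4 : C.comp a b = C.s α := by
    refine C.left_cancel ?_ (C.r_s α).symm h3
    rw [C.r_comp hsab]; exact ha
  have hsb : C.s b = C.s α := by
    rw [← C.s_comp hsab, h4, C.s_s]
  have hni := C.no_inverses hsab (by rw [h4, hsb])
  have h6 : C.s a = C.s b := by
    calc C.s a = C.r b := hsab
    _ = C.r (C.s b) := by rw [← hni.2]
    _ = C.s b := C.r_s b
  have hba : b = C.s a := hni.2.trans h6.symm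
  conv_lhs => rw [hab]
  rw [hba, ← C.s_comp ha, C.comp_id]

theorem pTail_inj {α δ : Λ} (h : pTail C α = pTail C δ) : α = δ :=
  pTail_antisymm (h ▸ mem_pTail_self C δ) (h.symm ▸ mem_pTail_self C α)

theorem comp_mem_pTail {α β : Λ} (h : C.s α = C.r β) : C.comp α β ∈ pTail C α :=
  ⟨β, h, rfl⟩

theorem mem_pTail_comp_iff {α β γ : Λ} (hβ : C.s α = C.r β) (hγ : C.s α = C.r γ) :
    C.comp α β ∈ pTail C (C.comp α γ) ↔ β ∈ pTail C γ := by
  constructor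
  · rintro ⟨e, he, hEq⟩
    rw [C.s_comp hγ] at he
    rw [C.comp_assoc hγ he] at hEq
    exact ⟨e, he, C.left_cancel hβ (by rw [C.r_comp he]; exact hγ) hEq⟩
  · rintro ⟨e, he, rfl⟩
    exact ⟨e, by rw [C.s_comp hγ]; exact he,
      (C.comp_assoc hγ he).symm⟩

/-- Facts about vertices. -/
theorem s_vertex {v : Λ} (hv : C.r v = v) : C.s v = v := by
  conv_lhs => rw [← hv]
  rw [C.s_r, hv]

theorem mem_pTail_vertex {v δ : Λ} (hv : C.r v = v) (hδ : C.r δ = v) :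
    δ ∈ pTail C v :=
  ⟨δ, by rw [s_vertex hv, ← hδ], by rw [← hδ, C.id_comp]⟩

theorem comp_vertex {v β : Λ} (hβ : C.r β = v) : C.comp v β = β := by
  rw [← hβ, C.id_comp]

/-- A finite union of tails. -/
def FTU (C : CategoryOfPaths Λ) (S : Set Λ) : Prop :=
  ∃ G : Set Λ, G.Finite ∧ S = ⋃ ε ∈ G, pTail C ε

theorem FTU_pTail (C : CategoryOfPaths Λ) (α : Λ) : FTU C (pTail C α) :=
  ⟨{α}, Set.finite_singleton α, by simp⟩

theorem FTU_inter_pTail (hfa : FinitelyAligned C) {S : Set Λ} (hS : FTU C S)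
    (γ : Λ) : FTU C (S ∩ pTail C γ) := by
  obtain ⟨G, hG, rfl⟩ := hS
  have key : ∀ ε : Λ, ∃ G' : Set Λ, G'.Finite ∧
      pTail C ε ∩ pTail C γ = ⋃ δ ∈ G', pTail C δ := fun ε => hfa ε γ
  choose G' hG' hG'eq using key
  refine ⟨⋃ ε ∈ G, G' ε, hG.biUnion (fun ε _ => hG' ε), ?_⟩
  rw [Set.iUnion₂_inter]
  ext x
  simp only [Set.mem_iUnion]
  constructor
  · rintro ⟨ε, hε, hx⟩
    rw [hG'eq ε] at hx
    simp only [Set.mem_iUnion] at hx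
    obtain ⟨δ, hδ, hx⟩ := hx
    exact ⟨δ, ⟨ε, hε, hδ⟩, hx⟩
  · rintro ⟨δ, ⟨ε, hε, hδ⟩, hx⟩
    refine ⟨ε, hε, ?_⟩
    rw [hG'eq ε]
    simp only [Set.mem_iUnion]
    exact ⟨δ, hδ, hx⟩

theorem FTU_biUnion {ι : Type*} {G : Set ι} (hG : G.Finite) {f : ι → Set Λ}
    (hf : ∀ ε ∈ G, FTU C (f ε)) : FTU C (⋃ ε ∈ G, f ε) := by
  have key : ∀ ε : ι, ∃ G' : Set Λ, ε ∈ G → (G'.Finite ∧ f ε = ⋃ δ ∈ G', pTail C δ) := by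
    intro ε
    by_cases hε : ε ∈ G
    · obtain ⟨G', h1, h2⟩ := hf ε hε
      exact ⟨G', fun _ => ⟨h1, h2⟩⟩
    · exact ⟨∅, fun h => absurd h hε⟩
  choose G' hG' using key
  refine ⟨⋃ ε ∈ G, G' ε, hG.biUnion (fun ε hε => (hG' ε hε).1), ?_⟩
  ext x
  simp only [Set.mem_iUnion]
  constructor
  · rintro ⟨ε, hε, hx⟩
    rw [(hG' ε hε).2] at hx
    simp only [Set.mem_iUnion] at hx
    obtain ⟨δ, hδ, hx⟩ := hx
    exact ⟨δ, ⟨ε, hε, hδ⟩, hx⟩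
  · rintro ⟨δ, ⟨ε, hε, hδ⟩, hx⟩
    refine ⟨ε, hε, ?_⟩
    rw [(hG' ε hε).2]
    simp only [Set.mem_iUnion]
    exact ⟨δ, hδ, hx⟩

theorem FTU_inter (hfa : FinitelyAligned C) {S T : Set Λ} (hS : FTU C S)
    (hT : FTU C T) : FTU C (S ∩ T) := by
  obtain ⟨G, hG, rfl⟩ := hT
  have heq : S ∩ ⋃ ε ∈ G, pTail C ε = ⋃ ε ∈ G, (S ∩ pTail C ε) := by
    rw [Set.inter_iUnion₂]
  rw [heq]
  exact FTU_biUnion hG (fun ε _ => FTU_inter_pTail hfa hS ε)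

/-- Minimality in a set w.r.t. the extension order. -/
def IsMinIn (C : CategoryOfPaths Λ) (S : Set Λ) (ε : Λ) : Prop :=
  ε ∈ S ∧ ∀ γ ∈ S, ε ∈ pTail C γ → γ = ε

theorem exists_min_below (hS : FTU C S) {δ : Λ} (hδ : δ ∈ S) :
    ∃ ε, IsMinIn C S ε ∧ δ ∈ pTail C ε := by
  obtain ⟨G, hG, rfl⟩ := hS
  set T : Set Λ := {γ ∈ G | δ ∈ pTail C γ} with hT
  have hTfin : T.Finite := hG.subset (Set.sep_subset _ _)
  have hTne : T.Nonempty := by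
    simp only [Set.mem_iUnion] at hδ
    obtain ⟨ε, hε, hδε⟩ := hδ
    exact ⟨ε, hε, hδε⟩
  obtain ⟨ε, hεT, hmax'⟩ := Set.Finite.exists_maximalFor (fun γ => pTail C γ) T hTfin hTne
  have hmax : ∀ g ∈ T, pTail C ε ⊆ pTail C g → pTail C ε = pTail C g :=
    fun g hg h => le_antisymm h (hmax' hg h)
  refine ⟨ε, ⟨?_, ?_⟩, hεT.2⟩
  · simp only [Set.mem_iUnion]; exact ⟨ε, hεT.1, mem_pTail_self C ε⟩
  · intro γ hγ hεγ
    simp only [Set.mem_iUnion] at hγ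
    obtain ⟨g, hg, hγg⟩ := hγ
    have hεg : pTail C ε ⊆ pTail C γ := pTail_subset hεγ
    have hγg' : pTail C γ ⊆ pTail C g := pTail_subset hγg
    have hgT : g ∈ T := ⟨hg, hγg' (hεg hεT.2)⟩
    have h1 : pTail C ε = pTail C g := hmax g hgT (hεg.trans hγg')
    have h2 : pTail C γ = pTail C ε :=
      Set.Subset.antisymm (h1 ▸ hγg') hεg
    exact pTail_inj h2

/-- The set of minimal elements of an FTU set is finite. -/
theorem minIn_finite (hS : FTU C S) : {ε | IsMinIn C S ε}.Finite := by
  obtain ⟨G, hG, rfl⟩ := hS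
  refine hG.subset ?_
  rintro ε ⟨hε, hmin⟩
  simp only [Set.mem_iUnion] at hε
  obtain ⟨g, hg, hεg⟩ := hε
  have : g = ε := hmin g (by simp only [Set.mem_iUnion]; exact ⟨g, hg, mem_pTail_self C g⟩) hεg
  rwa [← this]

/-! ### Directed sets -/

theorem directed_finite_ext {x : Set Λ} (hdir : pDirected C x) (hne : x.Nonempty)
    {S : Set Λ} (hS : S.Finite) (hSx : S ⊆ x) :
    ∃ γ ∈ x, ∀ s ∈ S, γ ∈ pTail C s := by
  refine @Set.Finite.induction_on Λ
    (fun S _ => S ⊆ x → ∃ γ ∈ x, ∀ s ∈ S, γ ∈ pTail C s) S hS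
    (fun _ => ⟨hne.some, hne.some_mem, by simp⟩) ?_ hSx
  clear hSx hS S
  intro a S' ha hS' IH hSx
  obtain ⟨γ', hγ'x, hγ'⟩ := IH (fun s hs => hSx (Set.mem_insert_of_mem a hs))
  have hax : a ∈ x := hSx (Set.mem_insert a S')
  obtain ⟨η, ⟨⟨hη1, hη2⟩, hη3⟩⟩ := hdir γ' hγ'x a hax
  refine ⟨η, hη3, ?_⟩
  rintro s (rfl | hs)
  · exact hη2
  · exact pTail_trans (hγ' s hs) hη1

theorem mem_of_insert_directed {v a : Λ} {m : Set Λ} (hm : m ∈ lamStarStar C v)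
    (h : pDirected C (insert a m)) (ha : C.r a = v) : a ∈ m := by
  have := hm.2.2 (insert a m) ?_ h (Set.subset_insert a m)
  · rw [← this]; exact Set.mem_insert a m
  · rintro b (rfl | hb)
    · exact ha
    · exact hm.1 hb

theorem maximal_hereditary {v : Λ} {m : Set Λ} (hm : m ∈ lamStarStar C v) :
    pHereditary C m := by
  intro γ hγ α hγα
  refine mem_of_insert_directed hm ?_ ?_
  · rintro p (rfl | hp) q (rfl | hq)
    · exact ⟨γ, ⟨hγα, hγα⟩, Set.mem_insert_of_mem _ hγ⟩
    · obtain ⟨η, ⟨⟨h1, h2⟩, h3⟩⟩ := hm.2.1 γ hγ q hq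
      exact ⟨η, ⟨pTail_trans hγα h1, h2⟩, Set.mem_insert_of_mem _ h3⟩
    · obtain ⟨η, ⟨⟨h1, h2⟩, h3⟩⟩ := hm.2.1 p hp γ hγ
      exact ⟨η, ⟨h1, pTail_trans hγα h2⟩, Set.mem_insert_of_mem _ h3⟩
    · obtain ⟨η, ⟨⟨h1, h2⟩, h3⟩⟩ := hm.2.1 p hp q hq
      exact ⟨η, ⟨h1, h2⟩, Set.mem_insert_of_mem _ h3⟩
  · rw [← r_eq_of_mem_pTail hγα]
    exact hm.1 hγ

theorem vertex_mem_maximal {v : Λ} (hv : C.r v = v) {m : Set Λ}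
    (hm : m ∈ lamStarStar C v) : v ∈ m := by
  refine mem_of_insert_directed hm ?_ hv
  have hvv : v ∈ pTail C v := mem_pTail_self C v
  rintro p hp q hq
  rcases hp with hp | hp <;> rcases hq with hq | hq
  · exact ⟨v, ⟨by rw [hp]; exact hvv, by rw [hq]; exact hvv⟩, Set.mem_insert v m⟩
  · exact ⟨q, ⟨by rw [hp]; exact mem_pTail_vertex hv (hm.1 hq), mem_pTail_self C q⟩,
      Set.mem_insert_of_mem _ hq⟩
  · exact ⟨p, ⟨mem_pTail_self C p, by rw [hq]; exact mem_pTail_vertex hv (hm.1 hp)⟩,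
      Set.mem_insert_of_mem _ hp⟩
  · obtain ⟨η, ⟨⟨h1, h2⟩, h3⟩⟩ := hm.2.1 p hp q hq
    exact ⟨η, ⟨h1, h2⟩, Set.mem_insert_of_mem _ h3⟩

theorem maximal_mem_lamStar {v : Λ} (hv : C.r v = v) {m : Set Λ}
    (hm : m ∈ lamStarStar C v) : m ∈ lamStar C v :=
  ⟨⟨v, vertex_mem_maximal hv hm⟩, hm.1, hm.2.1, maximal_hereditary hm⟩

/-- Zorn: every directed subset of `vΛ` extends to a maximal one. -/
theorem exists_maximal_superset {v : Λ} {x₀ : Set Λ} (hdir : pDirected C x₀)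
    (hsub : x₀ ⊆ pRng C v) : ∃ m ∈ lamStarStar C v, x₀ ⊆ m := by
  set P : Set (Set Λ) := {y | x₀ ⊆ y ∧ y ⊆ pRng C v ∧ pDirected C y} with hP
  have hzorn := zorn_subset_nonempty P ?_ x₀ ⟨Set.Subset.rfl, hsub, hdir⟩
  · obtain ⟨m, hxm, hmP, hmax⟩ := hzorn
    refine ⟨m, ⟨hmP.2.1, hmP.2.2, ?_⟩, hxm⟩
    intro y hy1 hy2 hy3
    have hyP : y ∈ P := ⟨hxm.trans hy3, hy1, hy2⟩
    exact Set.Subset.antisymm (hmax hyP hy3) hy3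
  · intro c hcP hchain hcne
    refine ⟨⋃₀ c, ⟨?_, ?_, ?_⟩, fun s hs => Set.subset_sUnion_of_mem hs⟩
    · obtain ⟨y, hy⟩ := hcne
      exact (hcP hy).1.trans (Set.subset_sUnion_of_mem hy)
    · rintro a ⟨y, hy, hay⟩
      exact (hcP hy).2.1 hay
    · rintro a ⟨y, hy, hay⟩ b ⟨y', hy', hby'⟩
      rcases hchain.total hy hy' with h | h
      · obtain ⟨η, ⟨hη1, hη2⟩⟩ := (hcP hy').2.2 a (h hay) b hby'
        exact ⟨η, hη1, Set.subset_sUnion_of_mem hy' hη2⟩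
      · obtain ⟨η, ⟨hη1, hη2⟩⟩ := (hcP hy).2.2 a hay b (h hby')
        exact ⟨η, hη1, Set.subset_sUnion_of_mem hy hη2⟩

/-! ### Operations on directed hereditary sets -/

theorem pMulStar_directed {α : Λ} {Z : Set Λ} (hZr : Z ⊆ pRng C (C.s α))
    (hdir : pDirected C Z) : pDirected C (pMulStar C α Z) := by
  rintro δ ⟨γ, hγZ, hγr, hγδ⟩ δ' ⟨γ', hγ'Z, hγ'r, hγ'δ'⟩
  obtain ⟨γ'', ⟨⟨h1, h2⟩, h3⟩⟩ := hdir γ hγZ γ' hγ'Z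
  have hγ''r : C.s α = C.r γ'' := (hZr h3).symm
  refine ⟨C.comp α γ'', ⟨?_, ?_⟩, γ'', h3, hγ''r, mem_pTail_self _ _⟩
  · exact pTail_trans hγδ ((mem_pTail_comp_iff hγ''r hγr).2 h1)
  · exact pTail_trans hγ'δ' ((mem_pTail_comp_iff hγ''r hγ'r).2 h2)

theorem pMulStar_mem_lamStar {α : Λ} {x : Set Λ} (hx : x ∈ lamStar C (C.s α)) :
    pMulStar C α x ∈ lamStar C (C.r α) := by
  obtain ⟨hne, hsub, hdir, hher⟩ := hx
  refine ⟨?_, ?_, pMulStar_directed hsub hdir, ?_⟩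
  · obtain ⟨γ, hγ⟩ := hne
    exact ⟨α, γ, hγ, (hsub hγ).symm, comp_mem_pTail (hsub hγ).symm⟩
  · rintro δ ⟨γ, hγx, hγr, hγδ⟩
    show C.r δ = C.r α
    rw [← r_eq_of_mem_pTail hγδ, C.r_comp hγr]
  · rintro δ ⟨γ, hγx, hγr, hγδ⟩ δ' hδδ'
    exact ⟨γ, hγx, hγr, pTail_trans hδδ' hγδ⟩

theorem pShift_directed {ν : Λ} {z : Set Λ} (hdir : pDirected C z) :
    pDirected C (pShift C ν z) := by
  rintro τ ⟨hτr, hτz⟩ τ' ⟨hτ'r, hτ'z⟩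
  obtain ⟨η, ⟨⟨h1, h2⟩, h3⟩⟩ := hdir _ hτz _ hτ'z
  obtain ⟨e, he, rfl⟩ := h1
  rw [C.s_comp hτr] at he
  rw [C.comp_assoc hτr he] at h2 h3
  have hr'' : C.s ν = C.r (C.comp τ e) := by rw [C.r_comp he]; exact hτr
  exact ⟨C.comp τ e, ⟨comp_mem_pTail he, (mem_pTail_comp_iff hr'' hτ'r).1 h2⟩,
    hr'', h3⟩

theorem pShift_mem_lamStar {ν : Λ} {z : Set Λ} (hz : z ∈ lamStar C (C.r ν))
    (hν : ν ∈ z) : pShift C ν z ∈ lamStar C (C.s ν) := by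
  obtain ⟨hne, hsub, hdir, hher⟩ := hz
  refine ⟨?_, ?_, pShift_directed hdir, ?_⟩
  · obtain ⟨η, ⟨⟨h1, _⟩, h3⟩⟩ := hdir ν hν ν hν
    obtain ⟨τ, hτ, rfl⟩ := h1
    exact ⟨τ, hτ, h3⟩
  · rintro τ ⟨hτr, _⟩
    exact hτr.symm
  · rintro τ ⟨hτr, hτz⟩ τ₀ hττ₀
    have hr0 : C.s ν = C.r τ₀ := by rw [← r_eq_of_mem_pTail hττ₀]; exact hτr
    exact ⟨hr0, hher _ hτz _ ((mem_pTail_comp_iff hτr hr0).2 hττ₀)⟩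

theorem pMulStar_pShift_eq {ν : Λ} {z : Set Λ} (hz : z ∈ lamStar C (C.r ν))
    (hν : ν ∈ z) : pMulStar C ν (pShift C ν z) = z := by
  obtain ⟨hne, hsub, hdir, hher⟩ := hz
  apply Set.Subset.antisymm
  · rintro δ ⟨τ, ⟨hτr, hτz⟩, _, hτδ⟩
    exact hher _ hτz _ hτδ
  · intro δ hδ
    obtain ⟨η, ⟨⟨h1, h2⟩, h3⟩⟩ := hdir δ hδ ν hν
    obtain ⟨τ, hτ, rfl⟩ := h2
    exact ⟨τ, ⟨hτ, h3⟩, hτ, h1⟩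

/-- The shift of a maximal directed set at an element is maximal. -/
theorem pShift_maximal {v γ : Λ} {m : Set Λ} (hm : m ∈ lamStarStar C v)
    (hγ : γ ∈ m) : pShift C γ m ∈ lamStarStar C (C.s γ) := by
  refine ⟨fun τ hτ => hτ.1.symm, pShift_directed hm.2.1, ?_⟩
  intro Z hZr hZdir hUZ
  have hYr : pMulStar C γ Z ⊆ pRng C v := by
    rintro δ ⟨ζ, hζZ, hζr, hζδ⟩
    show C.r δ = v
    rw [← r_eq_of_mem_pTail hζδ, C.r_comp hζr]
    exact hm.1 hγ
  have hmY : m ⊆ pMulStar C γ Z := by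
    intro δ hδ
    obtain ⟨η, ⟨⟨h1, h2⟩, h3⟩⟩ := hm.2.1 δ hδ γ hγ
    obtain ⟨ζ, hζ, rfl⟩ := h2
    exact ⟨ζ, hUZ ⟨hζ, h3⟩, hζ, h1⟩
  have hYm : pMulStar C γ Z = m :=
    hm.2.2 _ hYr (pMulStar_directed hZr hZdir) hmY
  apply Set.Subset.antisymm
  · intro ζ hζ
    have : C.comp γ ζ ∈ pMulStar C γ Z :=
      ⟨ζ, hζ, (hZr hζ).symm, mem_pTail_self _ _⟩
    exact ⟨(hZr hζ).symm, hYm ▸ this⟩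
  · exact hUZ

/-! ### Maximal directed sets meet finite exhaustive sets -/

theorem chain_step (hfa : FinitelyAligned C) {g : ℕ → Λ}
    (hgmono : ∀ k N, k ≤ N → g N ∈ pTail C (g k)) {S : Set Λ} (hS : FTU C S)
    (hQ : ∀ n, (pTail C (g n) ∩ S).Nonempty) :
    ∃ ε ∈ S, ∀ n, (pTail C (g n) ∩ (S ∩ pTail C ε)).Nonempty := by
  by_contra hcon
  push_neg at hcon
  have hbad : ∀ ε : Λ, ∃ n : ℕ, ε ∈ S → (pTail C (g n) ∩ (S ∩ pTail C ε)) = ∅ := by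
    intro ε
    by_cases hε : ε ∈ S
    · obtain ⟨n, hn⟩ := hcon ε hε
      exact ⟨n, fun _ => hn⟩
    · exact ⟨0, fun h => absurd h hε⟩
  choose nb hnb using hbad
  have hMfin : (nb '' {ε | IsMinIn C S ε}).Finite := (minIn_finite hS).image nb
  obtain ⟨N, hN⟩ := hMfin.bddAbove
  obtain ⟨ζ, hζg, hζS⟩ := hQ N
  obtain ⟨ε, hεmin, hζε⟩ := exists_min_below hS hζS
  have hle : nb ε ≤ N := hN (Set.mem_image_of_mem nb hεmin)
  have : ζ ∈ pTail C (g (nb ε)) ∩ (S ∩ pTail C ε) :=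
    ⟨pTail_subset (hgmono _ _ hle) hζg, hζS, hζε⟩
  rw [hnb ε hεmin.1] at this
  exact this

theorem maximal_meets_exhaustive [Countable Λ] (hfa : FinitelyAligned C)
    {v : Λ} (hv : C.r v = v) {m : Set Λ} (hm : m ∈ lamStarStar C v)
    {F : Set Λ} (hF : F.Finite) (hex : ExhaustiveAt C v F) :
    ∃ β ∈ F, β ∈ m := by
  classical
  have hmne : m.Nonempty := ⟨v, vertex_mem_maximal hv hm⟩
  obtain ⟨f, hfr⟩ := (Set.to_countable m).exists_eq_range hmne
  have hfm : ∀ n, f n ∈ m := fun n => hfr ▸ Set.mem_range_self n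
  -- the cofinal chain g
  have hD : ∀ a b : Λ, ∃ η, a ∈ m → b ∈ m →
      η ∈ pTail C a ∧ η ∈ pTail C b ∧ η ∈ m := by
    intro a b
    by_cases ha : a ∈ m
    · by_cases hb : b ∈ m
      · obtain ⟨η, ⟨⟨h1, h2⟩, h3⟩⟩ := hm.2.1 a ha b hb
        exact ⟨η, fun _ _ => ⟨h1, h2, h3⟩⟩
      · exact ⟨a, fun _ h => absurd h hb⟩
    · exact ⟨a, fun h => absurd h ha⟩
  choose e hE using hD
  set g : ℕ → Λ := fun n => Nat.rec (f 0) (fun n gn => e gn (f (n + 1))) n with hg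
  have hg0 : g 0 = f 0 := rfl
  have hgsucc : ∀ n, g (n + 1) = e (g n) (f (n + 1)) := fun n => rfl
  have hgm : ∀ n, g n ∈ m := by
    intro n
    induction n with
    | zero => exact hfm 0
    | succ n IH => exact (hE (g n) (f (n + 1)) IH (hfm (n + 1))).2.2
  have hmono : ∀ n, g (n + 1) ∈ pTail C (g n) := fun n =>
    (hE (g n) (f (n + 1)) (hgm n) (hfm (n + 1))).1
  have hfg : ∀ n, g n ∈ pTail C (f n) := by
    intro n
    cases n with
    | zero => exact mem_pTail_self C (f 0)
    | succ n => exact (hE (g n) (f (n + 1)) (hgm n) (hfm (n + 1))).2.1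
  have hgmono : ∀ k N, k ≤ N → g N ∈ pTail C (g k) := by
    intro k N hkN
    induction N, hkN using Nat.le_induction with
    | base => exact mem_pTail_self C (g k)
    | succ N hkN IH => exact pTail_trans IH (hmono N)
  -- pigeonhole: some β in F meets every g n
  have hβ : ∃ β ∈ F, ∀ n, (pTail C (g n) ∩ pTail C β).Nonempty := by
    by_contra hcon
    push_neg at hcon
    have hbad : ∀ β : Λ, ∃ n : ℕ, β ∈ F → (pTail C (g n) ∩ pTail C β) = ∅ := by
      intro β
      by_cases hβF : β ∈ F
      · obtain ⟨n, hn⟩ := hcon β hβF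
        exact ⟨n, fun _ => hn⟩
      · exact ⟨0, fun h => absurd h hβF⟩
    choose nb hnb using hbad
    obtain ⟨N, hN⟩ := (hF.image nb).bddAbove
    obtain ⟨β, hβF, η, hη1, hη2⟩ := hex (g N) (hm.1 (hgm N))
    have hmem : η ∈ pTail C (g (nb β)) ∩ pTail C β :=
      ⟨pTail_subset (hgmono _ _ (hN (Set.mem_image_of_mem nb hβF))) hη1, hη2⟩
    rw [hnb β hβF] at hmem
    exact hmem
  obtain ⟨β, hβF, hQall⟩ := hβ
  -- build the increasing chain above β
  set P : ℕ → Λ → Prop := fun n ε => ε ∈ pTail C (g n) ∧ ε ∈ pTail C β ∧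
    ∀ k, (pTail C (g k) ∩ (pTail C β ∩ pTail C ε)).Nonempty with hP
  have hbase : ∃ ε, P 0 ε := by
    obtain ⟨ε, hεS, hεQ⟩ := chain_step hfa hgmono
      (FTU_inter hfa (FTU_pTail C (g 0)) (FTU_pTail C β))
      (fun n => by
        obtain ⟨η, hη1, hη2⟩ := hQall n
        exact ⟨η, hη1, pTail_subset (hgmono 0 n (Nat.zero_le n)) hη1, hη2⟩)
    refine ⟨ε, hεS.1, hεS.2, fun k => ?_⟩
    obtain ⟨η, hη1, hη2, hη3⟩ := hεQ k
    exact ⟨η, hη1, hη2.2, hη3⟩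
  have hstep : ∀ n ε, P n ε → ∃ ε', P (n + 1) ε' ∧ ε' ∈ pTail C ε := by
    intro n ε hPnε
    obtain ⟨ε', hε'S, hε'Q⟩ := chain_step hfa hgmono
      (FTU_inter hfa (FTU_pTail C (g (n + 1)))
        (FTU_inter hfa (FTU_pTail C β) (FTU_pTail C ε)))
      (fun k => by
        obtain ⟨η, hη1, hη2, hη3⟩ := hPnε.2.2 (max k (n + 1))
        exact ⟨η, pTail_subset (hgmono k _ (le_max_left _ _)) hη1,
          pTail_subset (hgmono (n + 1) _ (le_max_right _ _)) hη1, hη2, hη3⟩)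
    refine ⟨ε', ⟨hε'S.1, hε'S.2.1, fun k => ?_⟩, hε'S.2.2⟩
    obtain ⟨η, hη1, hη2, hη3⟩ := hε'Q k
    exact ⟨η, hη1, hη2.2.1, hη3⟩
  set nxt : ℕ → Λ → Λ := fun n ε => if h : P n ε then (hstep n ε h).choose else ε
    with hnxt
  set ec : ℕ → Λ := fun n => Nat.rec hbase.choose (fun n en => nxt n en) n with hec
  have hecsucc : ∀ n, ec (n + 1) = nxt n (ec n) := fun n => rfl
  have hPe : ∀ n, P n (ec n) ∧ (∀ k ≤ n, ec n ∈ pTail C (ec k)) := by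
    intro n
    induction n with
    | zero =>
      refine ⟨hbase.choose_spec, fun k hk => ?_⟩
      interval_cases k
      exact mem_pTail_self C (ec 0)
    | succ n IH =>
      have h1 : ec (n + 1) = (hstep n (ec n) IH.1).choose := by
        rw [hecsucc]; show dite _ _ _ = _; rw [dif_pos IH.1]
      have h2 := (hstep n (ec n) IH.1).choose_spec
      rw [← h1] at h2
      refine ⟨h2.1, fun k hk => ?_⟩
      rcases Nat.lt_or_ge k (n + 1) with hlt | hge
      · exact pTail_trans (IH.2 k (Nat.lt_succ_iff.1 hlt)) h2.2
      · have : k = n + 1 := le_antisymm hk hge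
        rw [this]; exact mem_pTail_self _ _
  -- the set y
  set y : Set Λ := {δ | ∃ n, ec n ∈ pTail C δ} with hy
  have hym : y = m := by
    refine hm.2.2 y ?_ ?_ ?_
    · rintro δ ⟨n, hn⟩
      show C.r δ = v
      rw [← r_eq_of_mem_pTail hn, r_eq_of_mem_pTail (hPe n).1.1,
        r_eq_of_mem_pTail (hfg n)]
      exact hm.1 (hfm n)
    · rintro δ ⟨n, hn⟩ δ' ⟨n', hn'⟩
      refine ⟨ec (max n n'), ⟨?_, ?_⟩, max n n', mem_pTail_self _ _⟩
      · exact pTail_trans hn ((hPe (max n n')).2 n (le_max_left _ _))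
      · exact pTail_trans hn' ((hPe (max n n')).2 n' (le_max_right _ _))
    · intro γ hγ
      obtain ⟨n, rfl⟩ := hfr ▸ hγ
      exact ⟨n, pTail_trans (hfg n) (hPe n).1.1⟩
  exact ⟨β, hβF, hym ▸ ⟨0, (hPe 0).1.2.1⟩⟩

/-! ### The finite-exhaustive (FE) property -/

/-- `x` meets every finite exhaustive set along every element. -/
def FEsat (C : CategoryOfPaths Λ) (x : Set Λ) : Prop :=
  ∀ α ∈ x, ∀ F : Set Λ, F.Finite → (∀ β ∈ F, C.s α = C.r β) →
    ExhaustiveAt C (C.s α) F → ∃ β ∈ F, C.comp α β ∈ x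

/-- The minimal pushforward of a finite family along `ρ` is finite. -/
theorem pushforward_finite (hfa : FinitelyAligned C) {ρ : Λ} {F : Set Λ}
    (hF : F.Finite) :
    {η | C.s ρ = C.r η ∧ ∃ τ ∈ F, IsMinIn C (pTail C ρ ∩ pTail C τ)
      (C.comp ρ η)}.Finite := by
  apply Set.Finite.of_finite_image (f := fun η => C.comp ρ η)
  · apply Set.Finite.subset
      (hF.biUnion (fun τ _ => minIn_finite (FTU_inter hfa (FTU_pTail C ρ) (FTU_pTail C τ))))
    rintro x ⟨η, ⟨hηr, τ, hτF, hmin⟩, rfl⟩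
    exact Set.mem_biUnion hτF hmin
  · rintro η ⟨hηr, -⟩ η' ⟨hη'r, -⟩ hEq
    exact C.left_cancel hηr hη'r hEq

/-- The minimal pushforward of an exhaustive family along `ρ` is exhaustive. -/
theorem pushforward_exhaustive (hfa : FinitelyAligned C) {ρ : Λ} {F : Set Λ}
    (hex : ExhaustiveAt C (C.r ρ) F) :
    ExhaustiveAt C (C.s ρ) {η | C.s ρ = C.r η ∧ ∃ τ ∈ F,
      IsMinIn C (pTail C ρ ∩ pTail C τ) (C.comp ρ η)} := by
  intro ω hω
  have hρω : C.s ρ = C.r ω := hω.symm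
  obtain ⟨τ, hτF, ζ, hζ1, hζ2⟩ := hex (C.comp ρ ω) (C.r_comp hρω)
  have hζρ : ζ ∈ pTail C ρ := pTail_trans (comp_mem_pTail hρω) hζ1
  obtain ⟨ε, hεmin, hζε⟩ := exists_min_below
    (FTU_inter hfa (FTU_pTail C ρ) (FTU_pTail C τ)) ⟨hζρ, hζ2⟩
  obtain ⟨η, hηr, hηEq⟩ := hεmin.1.1
  refine ⟨η, ⟨hηr, τ, hτF, by rwa [← hηEq]⟩, ?_⟩
  -- ζ extends both ρω and ρη; cancel ρ
  obtain ⟨θ, hθ, hζeq1⟩ := hζ1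
  rw [C.s_comp hρω] at hθ
  rw [C.comp_assoc hρω hθ] at hζeq1
  obtain ⟨θ', hθ', hζeq2⟩ := hζε
  rw [hηEq] at hζeq2 hθ'
  rw [C.s_comp hηr] at hθ'
  rw [C.comp_assoc hηr hθ'] at hζeq2
  have hcan : C.comp ω θ = C.comp η θ' := by
    refine C.left_cancel ?_ ?_ (hζeq1.symm.trans hζeq2)
    · rw [C.r_comp hθ]; exact hρω
    · rw [C.r_comp hθ']; exact hηr
  exact ⟨C.comp ω θ, comp_mem_pTail hθ, hcan ▸ comp_mem_pTail hθ'⟩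

theorem FEsat_pMulStar (hfa : FinitelyAligned C) {μ : Λ} {x : Set Λ}
    (hFE : FEsat C x) : FEsat C (pMulStar C μ x) := by
  rintro α ⟨γ, hγx, hγr, ρ, hρ, hEq⟩ F hFfin hFcomp hFex
  have hsγρ : C.s γ = C.s ρ := by rw [← C.s_comp hγr, hEq, C.s_comp hρ]
  have hrρ : C.r ρ = C.s α := hρ.symm
  set F'' : Set Λ := {η | C.s ρ = C.r η ∧ ∃ τ ∈ F,
    IsMinIn C (pTail C ρ ∩ pTail C τ) (C.comp ρ η)} with hF''
  have hexF'' : ExhaustiveAt C (C.s γ) F'' := by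
    rw [hsγρ]
    exact pushforward_exhaustive hfa (hrρ ▸ hFex)
  obtain ⟨η, ⟨hηr, τ, hτF, hmin⟩, hγηx⟩ := hFE γ hγx F''
    (pushforward_finite hfa hFfin)
    (fun η hη => hsγρ.trans hη.1) hexF''
  refine ⟨τ, hτF, C.comp γ η, hγηx, ?_, ?_⟩
  · rw [C.r_comp (hsγρ.trans hηr)]; exact hγr
  · -- μ(γη) = α(ρη) ∈ (ατ)Λ
    have hγη : C.s γ = C.r η := hsγρ.trans hηr
    have h1 : C.comp μ (C.comp γ η) = C.comp α (C.comp ρ η) := by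
      rw [← C.comp_assoc hγr hγη, hEq, C.comp_assoc hρ hηr]
    obtain ⟨κ, hκ, hεeq⟩ := hmin.1.2
    have hτκ : C.s τ = C.r κ := hκ
    have h2 : C.comp α (C.comp ρ η) = C.comp (C.comp α τ) κ := by
      rw [hεeq, C.comp_assoc (hFcomp τ hτF) hτκ]
    rw [h1, h2]
    exact comp_mem_pTail (by rw [C.s_comp (hFcomp τ hτF)]; exact hτκ)

theorem FEsat_pShift {ν : Λ} {z : Set Λ} (hFE : FEsat C z) :
    FEsat C (pShift C ν z) := by
  rintro α ⟨hαr, hαz⟩ F hFfin hFcomp hFex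
  have hsα : C.s (C.comp ν α) = C.s α := C.s_comp hαr
  obtain ⟨β, hβF, hβz⟩ := hFE (C.comp ν α) hαz F hFfin
    (fun β hβ => hsα.trans (hFcomp β hβ)) (hsα ▸ hFex)
  rw [C.comp_assoc hαr (hFcomp β hβF)] at hβz
  exact ⟨β, hβF, by rw [C.r_comp (hFcomp β hβF)]; exact hαr, hβz⟩

/-! ### The tail ring and the topology -/

theorem pTail_subset_pRng {v α : Λ} (hα : C.r α = v) : pTail C α ⊆ pRng C v :=
  fun δ hδ => show C.r δ = v by rw [r_eq_of_mem_pTail hδ, hα]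

theorem tailRing_spec (C : CategoryOfPaths Λ) (v : Λ) :
    IsSetRingOn (pRng C v) (tailRing C v) ∧
      {E | ∃ α, C.r α = v ∧ E = pTail C α} ⊆ tailRing C v := by
  have hall : IsSetRingOn (pRng C v) {E | E ⊆ pRng C v} ∧
      {E | ∃ α, C.r α = v ∧ E = pTail C α} ⊆ {E | E ⊆ pRng C v} := by
    refine ⟨⟨⟨Set.empty_subset _, ?_, ?_, ?_⟩, fun E hE => hE⟩, ?_⟩
    · exact fun E hE F hF => Set.union_subset hE hF
    · exact fun E hE F hF => (Set.inter_subset_left).trans hE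
    · exact fun E hE F hF => (Set.diff_subset).trans hE
    · rintro E ⟨α, hα, rfl⟩
      exact pTail_subset_pRng hα
  constructor
  · refine ⟨⟨?_, ?_, ?_, ?_⟩, ?_⟩
    · exact fun R hR => hR.1.1.1
    · exact fun E hE F hF R hR => hR.1.1.2.1 E (hE R hR) F (hF R hR)
    · exact fun E hE F hF R hR => hR.1.1.2.2.1 E (hE R hR) F (hF R hR)
    · exact fun E hE F hF R hR => hR.1.1.2.2.2 E (hE R hR) F (hF R hR)
    · exact fun E hE => hall.1.2 E (hE _ hall)
  · exact fun E hE R hR => hR.2 hE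

theorem pTail_mem_tailRing {v α : Λ} (hα : C.r α = v) : pTail C α ∈ tailRing C v :=
  (tailRing_spec C v).2 ⟨α, hα, rfl⟩

theorem biUnion_mem_tailRing {v : Λ} {ι : Type v} {S : Set ι} (hS : S.Finite)
    {f : ι → Set Λ} (hf : ∀ s ∈ S, f s ∈ tailRing C v) :
    (⋃ s ∈ S, f s) ∈ tailRing C v := by
  refine @Set.Finite.induction_on ι
    (fun S _ => (∀ s ∈ S, f s ∈ tailRing C v) → (⋃ s ∈ S, f s) ∈ tailRing C v) S hS
    (fun _ => by simpa using (tailRing_spec C v).1.1.1) ?_ hf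
  intro a S' ha hS' IH hf'
  have heq : (⋃ s ∈ insert a S', f s) = f a ∪ ⋃ s ∈ S', f s := by
    simp [Set.biUnion_insert]
  rw [heq]
  exact (tailRing_spec C v).1.1.2.1 _ (hf' a (Set.mem_insert a S')) _
    (IH fun s hs => hf' s (Set.mem_insert_of_mem a hs))

theorem diff_mem_tailRing {v : Λ} {E F : Set Λ} (hE : E ∈ tailRing C v)
    (hF : F ∈ tailRing C v) : E \ F ∈ tailRing C v :=
  (tailRing_spec C v).1.1.2.2.2 E hE F hF

/-- Extraction of a basic neighborhood from a generated topology. -/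
theorem generateOpen_finite_basis {X : Type v} {S : Set (Set X)} {U : Set X}
    (hU : TopologicalSpace.GenerateOpen S U) :
    ∀ x ∈ U, ∃ T : Set (Set X), T.Finite ∧ T ⊆ S ∧ x ∈ ⋂₀ T ∧ ⋂₀ T ⊆ U := by
  induction hU with
  | basic u hu =>
    intro x hx
    exact ⟨{u}, Set.finite_singleton u, Set.singleton_subset_iff.2 hu,
      by simpa using hx, by simp⟩
  | univ => exact fun x _ => ⟨∅, Set.finite_empty, Set.empty_subset _, by simp, by simp⟩
  | inter u w hu hw IHu IHw =>
    intro x hx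
    obtain ⟨T1, h1f, h1S, h1x, h1u⟩ := IHu x hx.1
    obtain ⟨T2, h2f, h2S, h2x, h2u⟩ := IHw x hx.2
    refine ⟨T1 ∪ T2, h1f.union h2f, Set.union_subset h1S h2S, ?_, ?_⟩
    · rw [Set.sInter_union]; exact ⟨h1x, h2x⟩
    · rw [Set.sInter_union]
      exact fun y hy => ⟨h1u hy.1, h2u hy.2⟩
  | sUnion K hK IH =>
    intro x hx
    obtain ⟨u, huK, hxu⟩ := hx
    obtain ⟨T, hf, hS, hx', hu⟩ := IH u huK x hxu
    exact ⟨T, hf, hS, hx', hu.trans (Set.subset_sUnion_of_mem huK)⟩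

/-- Membership in the boundary, fiberwise. -/
theorem mem_boundary_iff {v : Λ} (hv : C.r v = v) (p : Xv C v) :
    (Sigma.mk (⟨v, hv⟩ : Vertex C) p : Xtotal C) ∈ boundarySet C ↔
      ∀ U : Set (Xv C v), TopologicalSpace.GenerateOpen
        {t | ∃ E ∈ tailRing C v, t = {y : Xv C v | E ∈ UC C v y.1}} U →
        p ∈ U → ∃ y ∈ U, (y : Xv C v).1 ∈ lamStarStar C v := by
  set I : ∀ w : Vertex C, TopologicalSpace (Xv C w.1) := fun w => XvTop C w.1 with hI
  set vv : Vertex C := ⟨v, hv⟩ with hvv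
  have hbd : boundarySet C = @closure _ (@instTopologicalSpaceSigma _ _ I)
      {q : Xtotal C | q.2.1 ∈ lamStarStar C q.1.1} := rfl
  rw [hbd, @mem_closure_iff _ (@instTopologicalSpaceSigma _ _ I) _ _]
  constructor
  · intro h U hU hpU
    have hUopen : @IsOpen _ (I vv) U := hU
    obtain ⟨q, hqo, hqM⟩ := h (Sigma.mk vv '' U)
      (@isOpenMap_sigmaMk _ _ I vv U hUopen) ⟨p, hpU, rfl⟩
    obtain ⟨y, hyU, hyq⟩ := hqo
    refine ⟨y, hyU, ?_⟩
    rw [← hyq] at hqM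
    exact hqM
  · intro h o ho hpo
    have hUopen : @IsOpen (Xv C v) (I vv) ((fun y => (Sigma.mk vv y : Xtotal C)) ⁻¹' o) :=
      (@isOpen_sigma_iff _ _ I o).1 ho vv
    obtain ⟨y, hyU, hyM⟩ := h _ hUopen hpo
    exact ⟨Sigma.mk vv y, hyU, hyM⟩

/-! ### Normal forms for tail-ring sets -/

/-- Basic normal-form components. -/
def nf0 (C : CategoryOfPaths Λ) : Set (Set Λ) :=
  {E | ∃ (a : Λ) (B : Set Λ), B.Finite ∧ E = pTail C a \ ⋃ β ∈ B, pTail C β}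

/-- Finite unions of basic components. -/
def NF (C : CategoryOfPaths Λ) : Set (Set Λ) :=
  {E | ∃ 𝒞 : Set (Set Λ), 𝒞.Finite ∧ 𝒞 ⊆ nf0 C ∧ E = ⋃₀ 𝒞}

theorem nf0_subset_NF : nf0 C ⊆ NF C := fun c hc =>
  ⟨{c}, Set.finite_singleton c, Set.singleton_subset_iff.2 hc,
    (Set.sUnion_singleton c).symm⟩

theorem NF_empty : (∅ : Set Λ) ∈ NF C :=
  ⟨∅, Set.finite_empty, Set.empty_subset _, Set.sUnion_empty.symm⟩

theorem NF_union {E F : Set Λ} (hE : E ∈ NF C) (hF : F ∈ NF C) : E ∪ F ∈ NF C := by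
  obtain ⟨𝒞, h1, h2, rfl⟩ := hE
  obtain ⟨𝒟, h3, h4, rfl⟩ := hF
  exact ⟨𝒞 ∪ 𝒟, h1.union h3, Set.union_subset h2 h4, (Set.sUnion_union 𝒞 𝒟).symm⟩

theorem NF_biUnion {ι : Type v} {S : Set ι} (hS : S.Finite) {f : ι → Set Λ}
    (hf : ∀ s ∈ S, f s ∈ NF C) : (⋃ s ∈ S, f s) ∈ NF C := by
  refine @Set.Finite.induction_on ι
    (fun S _ => (∀ s ∈ S, f s ∈ NF C) → (⋃ s ∈ S, f s) ∈ NF C) S hS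
    (fun _ => by simpa using NF_empty) ?_ hf
  intro a S' ha hS' IH hf'
  have heq : (⋃ s ∈ insert a S', f s) = f a ∪ ⋃ s ∈ S', f s := by
    simp [Set.biUnion_insert]
  rw [heq]
  exact NF_union (hf' a (Set.mem_insert a S'))
    (IH fun s hs => hf' s (Set.mem_insert_of_mem a hs))

theorem FTU_diff_mem_NF {S : Set Λ} (hS : FTU C S) {B : Set Λ} (hB : B.Finite) :
    S \ (⋃ β ∈ B, pTail C β) ∈ NF C := by
  obtain ⟨G, hG, rfl⟩ := hS
  have heq : (⋃ ε ∈ G, pTail C ε) \ (⋃ β ∈ B, pTail C β)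
      = ⋃ ε ∈ G, (pTail C ε \ ⋃ β ∈ B, pTail C β) := by
    ext x
    simp only [Set.mem_diff, Set.mem_iUnion]
    constructor
    · rintro ⟨⟨ε, hε, hxε⟩, hnot⟩
      exact ⟨ε, hε, hxε, hnot⟩
    · rintro ⟨ε, hε, hxε, hnot⟩
      exact ⟨⟨ε, hε, hxε⟩, hnot⟩
  rw [heq]
  exact NF_biUnion hG (fun ε _ => nf0_subset_NF ⟨ε, B, hB, rfl⟩)

theorem nf0_inter_nf0 (hfa : FinitelyAligned C) {c c' : Set Λ} (hc : c ∈ nf0 C)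
    (hc' : c' ∈ nf0 C) : c ∩ c' ∈ NF C := by
  obtain ⟨a, B, hB, rfl⟩ := hc
  obtain ⟨a', B', hB', rfl⟩ := hc'
  have heq : (pTail C a \ ⋃ β ∈ B, pTail C β) ∩ (pTail C a' \ ⋃ β ∈ B', pTail C β)
      = (pTail C a ∩ pTail C a') \ ⋃ β ∈ B ∪ B', pTail C β := by
    rw [Set.biUnion_union]
    ext x
    simp only [Set.mem_inter_iff, Set.mem_diff, Set.mem_union]
    tauto
  rw [heq]
  exact FTU_diff_mem_NF (FTU_inter hfa (FTU_pTail C a) (FTU_pTail C a'))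
    (hB.union hB')

theorem NF_inter (hfa : FinitelyAligned C) {E F : Set Λ} (hE : E ∈ NF C)
    (hF : F ∈ NF C) : E ∩ F ∈ NF C := by
  obtain ⟨𝒞, h1, h2, rfl⟩ := hE
  obtain ⟨𝒟, h3, h4, rfl⟩ := hF
  have heq : (⋃₀ 𝒞) ∩ (⋃₀ 𝒟) = ⋃ c ∈ 𝒞, ⋃ d ∈ 𝒟, c ∩ d := by
    ext x
    simp only [Set.mem_inter_iff, Set.mem_sUnion, Set.mem_iUnion]
    constructor
    · rintro ⟨⟨c, hc, hxc⟩, ⟨d, hd, hxd⟩⟩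
      exact ⟨c, hc, d, hd, hxc, hxd⟩
    · rintro ⟨c, hc, d, hd, hxc, hxd⟩
      exact ⟨⟨c, hc, hxc⟩, ⟨d, hd, hxd⟩⟩
  rw [heq]
  exact NF_biUnion h1 (fun c hc => NF_biUnion h3
    (fun d hd => nf0_inter_nf0 hfa (h2 hc) (h4 hd)))

theorem nf0_diff_nf0 (hfa : FinitelyAligned C) {c c' : Set Λ} (hc : c ∈ nf0 C)
    (hc' : c' ∈ nf0 C) : c \ c' ∈ NF C := by
  obtain ⟨a, B, hB, rfl⟩ := hc
  obtain ⟨a', B', hB', rfl⟩ := hc'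
  have heq : (pTail C a \ ⋃ β ∈ B, pTail C β) \ (pTail C a' \ ⋃ β ∈ B', pTail C β)
      = (pTail C a \ ⋃ β ∈ insert a' B, pTail C β) ∪
        ⋃ β' ∈ B', ((pTail C a ∩ pTail C β') \ ⋃ β ∈ B, pTail C β) := by
    ext x
    simp only [Set.mem_diff, Set.mem_union, Set.mem_iUnion, Set.mem_inter_iff,
      Set.mem_insert_iff, not_and, not_not, not_exists]
    constructor
    · rintro ⟨⟨hxa, hxB⟩, hnc'⟩
      by_cases hxa' : x ∈ pTail C a'
      · have hx2 := hnc' hxa'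
        push_neg at hx2
        obtain ⟨β', hβ', hxβ'⟩ := hx2
        exact Or.inr ⟨β', hβ', ⟨hxa, hxβ'⟩, hxB⟩
      · refine Or.inl ⟨hxa, ?_⟩
        rintro β hβ
        rcases hβ with hβ | hβ
        · rw [hβ]; exact hxa'
        · exact hxB β hβ
    · rintro (⟨hxa, hxB⟩ | ⟨β', hβ', ⟨hxa, hxβ'⟩, hxB⟩)
      · refine ⟨⟨hxa, fun β hβ => hxB β (Or.inr hβ)⟩, fun hxa' => ?_⟩
        exact absurd hxa' (hxB a' (Or.inl rfl))
      · exact ⟨⟨hxa, hxB⟩, fun _ hall => hall β' hβ' hxβ'⟩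
  rw [heq]
  refine NF_union (nf0_subset_NF ⟨a, insert a' B, hB.insert a', rfl⟩) ?_
  exact NF_biUnion hB' (fun β' _ => FTU_diff_mem_NF
    (FTU_inter hfa (FTU_pTail C a) (FTU_pTail C β')) hB)

theorem nf0_diff_NF (hfa : FinitelyAligned C) {c F : Set Λ} (hc : c ∈ nf0 C)
    (hF : F ∈ NF C) : c \ F ∈ NF C := by
  obtain ⟨𝒟, h3, h4, rfl⟩ := hF
  revert h4
  refine @Set.Finite.induction_on (Set Λ)
    (fun 𝒟 _ => 𝒟 ⊆ nf0 C → c \ ⋃₀ 𝒟 ∈ NF C) 𝒟 h3 ?_ ?_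
  · intro _
    rw [Set.sUnion_empty, Set.diff_empty]
    exact nf0_subset_NF hc
  · intro c' D hc'D hD IH hsub
    rw [Set.sUnion_insert, ← Set.diff_inter_diff]
    exact NF_inter hfa (nf0_diff_nf0 hfa hc (hsub (Set.mem_insert c' D)))
      (IH fun d hd => hsub (Set.mem_insert_of_mem c' hd))

theorem NF_diff (hfa : FinitelyAligned C) {E F : Set Λ} (hE : E ∈ NF C)
    (hF : F ∈ NF C) : E \ F ∈ NF C := by
  obtain ⟨𝒞, h1, h2, rfl⟩ := hE
  have heq : (⋃₀ 𝒞) \ F = ⋃ c ∈ 𝒞, (c \ F) := by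
    ext x
    simp only [Set.mem_diff, Set.mem_sUnion, Set.mem_iUnion]
    constructor
    · rintro ⟨⟨c, hc, hxc⟩, hnot⟩
      exact ⟨c, hc, hxc, hnot⟩
    · rintro ⟨c, hc, hxc, hnot⟩
      exact ⟨⟨c, hc, hxc⟩, hnot⟩
  rw [heq]
  exact NF_biUnion h1 (fun c hc => nf0_diff_NF hfa (h2 hc) hF)

theorem tailRing_subset_NF (hfa : FinitelyAligned C) (v : Λ) :
    tailRing C v ⊆ {E | E ∈ NF C ∧ E ⊆ pRng C v} := by
  apply Set.sInter_subset_of_mem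
  refine ⟨⟨⟨⟨NF_empty, Set.empty_subset _⟩, ?_, ?_, ?_⟩, fun E hE => hE.2⟩, ?_⟩
  · exact fun E hE F hF => ⟨NF_union hE.1 hF.1, Set.union_subset hE.2 hF.2⟩
  · exact fun E hE F hF => ⟨NF_inter hfa hE.1 hF.1, Set.inter_subset_left.trans hE.2⟩
  · exact fun E hE F hF => ⟨NF_diff hfa hE.1 hF.1, Set.diff_subset.trans hE.2⟩
  · rintro E ⟨α, hα, rfl⟩
    refine ⟨nf0_subset_NF ⟨α, ∅, Set.finite_empty, by simp⟩, pTail_subset_pRng hα⟩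

/-! ### Boundary = FE points -/

theorem cancel_meet {ρ ω η ζ : Λ} (hω : C.s ρ = C.r ω) (hη : C.s ρ = C.r η)
    (h1 : ζ ∈ pTail C (C.comp ρ ω)) (h2 : ζ ∈ pTail C (C.comp ρ η)) :
    pMeets C ω η := by
  obtain ⟨θ, hθ, hζ1⟩ := h1
  rw [C.s_comp hω] at hθ
  rw [C.comp_assoc hω hθ] at hζ1
  obtain ⟨θ', hθ', hζ2⟩ := h2
  rw [C.s_comp hη] at hθ'
  rw [C.comp_assoc hη hθ'] at hζ2
  have hcan : C.comp ω θ = C.comp η θ' := by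
    refine C.left_cancel ?_ ?_ (hζ1.symm.trans hζ2)
    · rw [C.r_comp hθ]; exact hω
    · rw [C.r_comp hθ']; exact hη
  exact ⟨C.comp ω θ, comp_mem_pTail hθ, hcan ▸ comp_mem_pTail hθ'⟩

theorem vertex_mem_lamStar {v : Λ} (hv : C.r v = v) {x : Set Λ}
    (hx : x ∈ lamStar C v) : v ∈ x := by
  obtain ⟨γ, hγ⟩ := hx.1
  exact hx.2.2.2 γ hγ v (mem_pTail_vertex hv (hx.2.1 hγ))

/-- Selection of a single normal-form component cofinally inside `x`. -/
theorem UC_selection (hfa : FinitelyAligned C) {v : Λ} {x : Set Λ}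
    (hx : x ∈ lamStar C v) {E : Set Λ} (hE : E ∈ tailRing C v) {a0 : Λ}
    (ha0 : a0 ∈ x) (hxE : x ∩ pTail C a0 ⊆ E) :
    ∃ ᾱ ∈ x, ᾱ ∈ pTail C a0 ∧ ∃ B : Set Λ, B.Finite ∧
      (pTail C ᾱ \ ⋃ β ∈ B, pTail C β) ⊆ E ∧
      ∀ β ∈ B, x ∩ pTail C ᾱ ∩ pTail C β = ∅ := by
  classical
  obtain ⟨⟨𝒞, h𝒞fin, h𝒞nf, hEeq⟩, -⟩ := tailRing_subset_NF hfa v hE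
  -- some component is cofinal in x above a0
  have hcof : ∃ c ∈ 𝒞, ∀ γ ∈ x, ∃ ζ, ζ ∈ x ∧ ζ ∈ pTail C a0 ∧ ζ ∈ c ∧
      ζ ∈ pTail C γ := by
    by_contra hcon
    push_neg at hcon
    have hbad : ∀ c : Set Λ, ∃ γ, c ∈ 𝒞 → (γ ∈ x ∧ ∀ ζ, ζ ∈ x → ζ ∈ pTail C a0 →
        ζ ∈ c → ζ ∉ pTail C γ) := by
      intro c
      by_cases hc : c ∈ 𝒞
      · obtain ⟨γ, hγx, hγ⟩ := hcon c hc
        refine ⟨γ, fun _ => ⟨hγx, fun ζ h1 h2 h3 h4 => ?_⟩⟩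
        exact (hγ ζ h1 h2 h3) h4
      · exact ⟨a0, fun h => absurd h hc⟩
    choose gc hgc using hbad
    have hsubS : insert a0 (gc '' 𝒞) ⊆ x := by
      rintro s (rfl | ⟨c, hc, rfl⟩)
      · exact ha0
      · exact (hgc c hc).1
    obtain ⟨gb, hgbx, hgb⟩ := directed_finite_ext hx.2.2.1 hx.1
      ((h𝒞fin.image gc).insert a0) hsubS
    have hgba0 : gb ∈ pTail C a0 := hgb a0 (Set.mem_insert a0 _)
    have hgbE : gb ∈ E := hxE ⟨hgbx, hgba0⟩
    rw [hEeq] at hgbE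
    obtain ⟨c₀, hc₀, hgbc₀⟩ := hgbE
    exact (hgc c₀ hc₀).2 gb hgbx hgba0 hgbc₀
      (hgb (gc c₀) (Set.mem_insert_of_mem _ ⟨c₀, hc₀, rfl⟩))
  obtain ⟨c, hc𝒞, hcof⟩ := hcof
  obtain ⟨a, B, hBfin, hceq⟩ := h𝒞nf hc𝒞
  obtain ⟨ᾱ, hᾱx, hᾱa0, hᾱc, -⟩ := hcof a0 ha0
  have hᾱa : ᾱ ∈ pTail C a := by rw [hceq] at hᾱc; exact hᾱc.1
  refine ⟨ᾱ, hᾱx, hᾱa0, B, hBfin, ?_, ?_⟩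
  · intro δ ⟨hδᾱ, hδB⟩
    rw [hEeq]
    exact ⟨c, hc𝒞, by rw [hceq]; exact ⟨pTail_trans hᾱa hδᾱ, hδB⟩⟩
  · intro β hβ
    rw [Set.eq_empty_iff_forall_notMem]
    rintro δ ⟨⟨hδx, hδᾱ⟩, hδβ⟩
    obtain ⟨ζ, hζx, hζa0, hζc, hζδ⟩ := hcof δ hδx
    rw [hceq] at hζc
    exact hζc.2 (Set.mem_biUnion hβ (pTail_trans hδβ hζδ))

/-- The avoidance witness obtained from non-exhaustivity. -/
theorem avoid_witness (hfa : FinitelyAligned C) {x : Set Λ} (hFE : FEsat C x)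
    {ᾱ : Λ} (hᾱ : ᾱ ∈ x) {B : Set Λ} (hB : B.Finite)
    (hdisj : ∀ β ∈ B, x ∩ pTail C ᾱ ∩ pTail C β = ∅) :
    ∃ γ₀ ∈ pTail C ᾱ, ∀ β ∈ B, pTail C γ₀ ∩ pTail C β = ∅ := by
  set F : Set Λ := {η | C.s ᾱ = C.r η ∧ ∃ β ∈ B,
    IsMinIn C (pTail C ᾱ ∩ pTail C β) (C.comp ᾱ η)} with hF
  by_cases hex : ExhaustiveAt C (C.s ᾱ) F
  · obtain ⟨η, ⟨hηr, β, hβB, hmin⟩, hcompx⟩ := hFE ᾱ hᾱ F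
      (pushforward_finite hfa hB) (fun η hη => hη.1) hex
    have : C.comp ᾱ η ∈ x ∩ pTail C ᾱ ∩ pTail C β :=
      ⟨⟨hcompx, hmin.1.1⟩, hmin.1.2⟩
    rw [hdisj β hβB] at this
    exact this.elim
  · rw [ExhaustiveAt] at hex
    push_neg at hex
    obtain ⟨τ, hτr, hτ⟩ := hex
    refine ⟨C.comp ᾱ τ, comp_mem_pTail hτr.symm, ?_⟩
    intro β hβ
    rw [Set.eq_empty_iff_forall_notMem]
    rintro ζ ⟨hζ1, hζ2⟩
    have hζᾱ : ζ ∈ pTail C ᾱ := pTail_trans (comp_mem_pTail hτr.symm) hζ1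
    obtain ⟨ε, hεmin, hζε⟩ := exists_min_below
      (FTU_inter hfa (FTU_pTail C ᾱ) (FTU_pTail C β)) ⟨hζᾱ, hζ2⟩
    obtain ⟨η, hηr, hηEq⟩ := hεmin.1.1
    have hηF : η ∈ F := ⟨hηr, β, hβ, by rwa [← hηEq]⟩
    rw [hηEq] at hζε
    exact hτ η hηF (cancel_meet hτr.symm hηr hζ1 hζε)

/-- FE points belong to the boundary. -/
theorem FE_mem_boundary (hfa : FinitelyAligned C) {v : Λ} (hv : C.r v = v)
    {x : Set Λ} (hx : x ∈ lamStar C v) (hFE : FEsat C x) :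
    (Sigma.mk (⟨v, hv⟩ : Vertex C) (⟨x, hx⟩ : Xv C v) : Xtotal C) ∈
      boundarySet C := by
  classical
  rw [mem_boundary_iff hv]
  intro U hU hpU
  obtain ⟨T, hTfin, hTS, hxT, hTU⟩ := generateOpen_finite_basis hU _ hpU
  have hTE : ∀ t : Set (Xv C v), ∃ E : Set Λ, t ∈ T →
      (E ∈ tailRing C v ∧ t = {y : Xv C v | E ∈ UC C v y.1}) := by
    intro t
    by_cases ht : t ∈ T
    · obtain ⟨E, hE, hteq⟩ := hTS ht
      exact ⟨E, fun _ => ⟨hE, hteq⟩⟩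
    · exact ⟨∅, fun h => absurd h ht⟩
  choose Et hEt using hTE
  -- for each t ∈ T, get a UC witness
  have hxUC : ∀ t ∈ T, Et t ∈ UC C v x := by
    intro t ht
    have hxt : (⟨x, hx⟩ : Xv C v) ∈ t := hxT t ht
    rw [(hEt t ht).2] at hxt
    exact hxt
  have hαw : ∀ t : Set (Xv C v), ∃ α, t ∈ T → (α ∈ x ∧ x ∩ pTail C α ⊆ Et t) := by
    intro t
    by_cases ht : t ∈ T
    · obtain ⟨-, α, hαx, hsub⟩ := hxUC t ht
      exact ⟨α, fun _ => ⟨hαx, hsub⟩⟩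
    · exact ⟨v, fun h => absurd h ht⟩
  choose αt hαt using hαw
  have hsubS1 : αt '' T ⊆ x := by
    rintro s ⟨t, ht, rfl⟩
    exact (hαt t ht).1
  obtain ⟨a0, ha0x, ha0⟩ := directed_finite_ext hx.2.2.1 hx.1
    (hTfin.image αt) hsubS1
  -- selection for each t
  have hsel : ∀ t : Set (Xv C v), ∃ p : Λ × Set Λ, t ∈ T →
      (p.1 ∈ x ∧ p.1 ∈ pTail C a0 ∧ p.2.Finite ∧
        (pTail C p.1 \ ⋃ β ∈ p.2, pTail C β) ⊆ Et t ∧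
        ∀ β ∈ p.2, x ∩ pTail C p.1 ∩ pTail C β = ∅) := by
    intro t
    by_cases ht : t ∈ T
    · have hsubt : x ∩ pTail C a0 ⊆ Et t := fun δ hδ =>
        (hαt t ht).2 ⟨hδ.1, pTail_trans (ha0 (αt t) ⟨t, ht, rfl⟩) hδ.2⟩
      obtain ⟨ᾱ, h1, h2, B, h3, h4, h5⟩ := UC_selection hfa hx
        (hEt t ht).1 ha0x hsubt
      exact ⟨(ᾱ, B), fun _ => ⟨h1, h2, h3, h4, h5⟩⟩
    · exact ⟨(v, ∅), fun h => absurd h ht⟩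
  choose pt hpt using hsel
  have hsubS2 : (fun t => (pt t).1) '' T ⊆ x := by
    rintro s ⟨t, ht, rfl⟩
    exact (hpt t ht).1
  obtain ⟨ᾱ, hᾱx, hᾱ⟩ := directed_finite_ext hx.2.2.1 hx.1
    (hTfin.image (fun t => (pt t).1)) hsubS2
  set B : Set Λ := ⋃ t ∈ T, (pt t).2 with hB
  have hBfin : B.Finite := hTfin.biUnion (fun t ht => (hpt t ht).2.2.1)
  have hdisj : ∀ β ∈ B, x ∩ pTail C ᾱ ∩ pTail C β = ∅ := by
    intro β hβ
    simp only [hB, Set.mem_iUnion] at hβ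
    obtain ⟨t, ht, hβt⟩ := hβ
    rw [Set.eq_empty_iff_forall_notMem]
    rintro δ ⟨⟨hδx, hδᾱ⟩, hδβ⟩
    have : δ ∈ x ∩ pTail C (pt t).1 ∩ pTail C β :=
      ⟨⟨hδx, pTail_trans (hᾱ _ ⟨t, ht, rfl⟩) hδᾱ⟩, hδβ⟩
    rw [(hpt t ht).2.2.2.2 β hβt] at this
    exact this
  obtain ⟨γ₀, hγ₀ᾱ, hγ₀⟩ := avoid_witness hfa hFE hᾱx hBfin hdisj
  -- Zorn: a maximal directed set containing γ₀
  have hdir0 : pDirected C {δ | γ₀ ∈ pTail C δ} := by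
    intro δ hδ δ' hδ'
    exact ⟨γ₀, ⟨hδ, hδ'⟩, mem_pTail_self C γ₀⟩
  have hrng0 : {δ | γ₀ ∈ pTail C δ} ⊆ pRng C v := by
    intro δ hδ
    show C.r δ = v
    rw [← r_eq_of_mem_pTail hδ, r_eq_of_mem_pTail hγ₀ᾱ]
    exact hx.2.1 hᾱx
  obtain ⟨m, hm, hx₀m⟩ := exists_maximal_superset hdir0 hrng0
  have hγ₀m : γ₀ ∈ m := hx₀m (mem_pTail_self C γ₀)
  refine ⟨⟨m, maximal_mem_lamStar hv hm⟩, ?_, hm⟩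
  apply hTU
  intro t ht
  rw [(hEt t ht).2]
  refine ⟨(hEt t ht).1, γ₀, hγ₀m, ?_⟩
  rintro δ ⟨hδm, hδγ₀⟩
  apply (hpt t ht).2.2.2.1
  refine ⟨pTail_trans (pTail_trans (hᾱ _ ⟨t, ht, rfl⟩) hγ₀ᾱ) hδγ₀, ?_⟩
  intro hδB
  simp only [Set.mem_iUnion] at hδB
  obtain ⟨β, hβt, hδβ⟩ := hδB
  have : δ ∈ pTail C γ₀ ∩ pTail C β := ⟨hδγ₀, hδβ⟩
  rw [hγ₀ β (Set.mem_biUnion ht hβt)] at this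
  exact this

/-- Boundary points are FE points. -/
theorem boundary_FEsat [Countable Λ] (hfa : FinitelyAligned C) {v : Λ}
    (hv : C.r v = v) {x : Set Λ} (hx : x ∈ lamStar C v)
    (hb : (Sigma.mk (⟨v, hv⟩ : Vertex C) (⟨x, hx⟩ : Xv C v) : Xtotal C) ∈
      boundarySet C) : FEsat C x := by
  intro α hα F hFfin hFcomp hFex
  by_contra hcon
  push_neg at hcon
  have hαv : C.r α = v := hx.2.1 hα
  set E : Set Λ := pTail C α \ ⋃ β ∈ F, pTail C (C.comp α β) with hE
  have hEmem : E ∈ tailRing C v :=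
    diff_mem_tailRing (pTail_mem_tailRing hαv)
      (biUnion_mem_tailRing hFfin (fun β hβ => pTail_mem_tailRing
        (by rw [C.r_comp (hFcomp β hβ)]; exact hαv)))
  have hxE : E ∈ UC C v x := by
    refine ⟨hEmem, α, hα, ?_⟩
    rintro δ ⟨hδx, hδα⟩
    refine ⟨hδα, ?_⟩
    intro hmem
    simp only [Set.mem_iUnion] at hmem
    obtain ⟨β, hβ, hδβ⟩ := hmem
    exact hcon β hβ (hx.2.2.2 δ hδx _ hδβ)
  obtain ⟨y, hyU, hyM⟩ := (mem_boundary_iff hv _).1 hb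
    {y : Xv C v | E ∈ UC C v y.1}
    (TopologicalSpace.GenerateOpen.basic _ ⟨E, hEmem, rfl⟩) hxE
  obtain ⟨-, α', hα'y, hsub⟩ := hyU
  have hα'E : α' ∈ E := hsub ⟨hα'y, mem_pTail_self C α'⟩
  obtain ⟨σ', hσ', hα'eq⟩ := hα'E.1
  -- the pushforward of F to s α' is exhaustive; the shifted maximal set meets it
  set F2 : Set Λ := (fun β => C.comp α β) '' F with hF2
  set F' : Set Λ := {η | C.s α' = C.r η ∧ ∃ τ ∈ F2,
    IsMinIn C (pTail C α' ∩ pTail C τ) (C.comp α' η)} with hF'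
  have hF'fin : F'.Finite := pushforward_finite hfa (hFfin.image _)
  have hF'ex : ExhaustiveAt C (C.s α') F' := by
    intro ω hω
    have hσω : C.s σ' = C.r ω := by rw [hω, hα'eq, C.s_comp hσ']
    obtain ⟨β, hβF, ζ, hζ1, hζ2⟩ := hFex (C.comp σ' ω)
      (by rw [C.r_comp hσω]; exact hσ'.symm)
    -- lift by α
    have hαζr : C.s α = C.r ζ := by
      rw [r_eq_of_mem_pTail hζ1, C.r_comp hσω]; exact hσ'
    have h1 : C.comp α ζ ∈ pTail C (C.comp α' ω) := by
      rw [hα'eq, C.comp_assoc hσ' hσω]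
      exact (mem_pTail_comp_iff hαζr (by rw [C.r_comp hσω]; exact hσ')).2 hζ1
    have h2 : C.comp α ζ ∈ pTail C (C.comp α β) :=
      (mem_pTail_comp_iff hαζr (hFcomp β hβF)).2 hζ2
    have hζα' : C.comp α ζ ∈ pTail C α' :=
      pTail_trans (comp_mem_pTail hω.symm) h1
    obtain ⟨ε, hεmin, hζε⟩ := exists_min_below
      (FTU_inter hfa (FTU_pTail C α') (FTU_pTail C (C.comp α β))) ⟨hζα', h2⟩
    obtain ⟨η, hηr, hηEq⟩ := hεmin.1.1
    refine ⟨η, ⟨hηr, C.comp α β, ⟨β, hβF, rfl⟩, by rwa [← hηEq]⟩, ?_⟩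
    rw [hηEq] at hζε
    exact cancel_meet (by rw [hα'eq, C.s_comp hσ']; exact hσω) hηr h1 hζε
  obtain ⟨η, hηF', hηz⟩ := maximal_meets_exhaustive hfa (C.r_s α')
    (pShift_maximal hyM hα'y) hF'fin hF'ex
  obtain ⟨hηr2, hηy⟩ := hηz
  have hηE : C.comp α' η ∈ E := hsub ⟨hηy, comp_mem_pTail hηr2⟩
  obtain ⟨hηr3, τ, hτF2, hτmin⟩ := hηF'
  obtain ⟨β, hβF, rfl⟩ := hτF2
  exact hηE.2 (Set.mem_biUnion hβF hτmin.1.2)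

/-! ### Minimal common extensions -/

theorem isMinIn_iff_pMinCE {μ ν ε : Λ} :
    IsMinIn C (pTail C μ ∩ pTail C ν) ε ↔ ε ∈ pMinCE C μ ν := by
  constructor
  · rintro ⟨⟨h1, h2⟩, hmin⟩
    refine ⟨?_, ?_⟩
    · rintro a (rfl | rfl)
      · exact h1
      · exact h2
    · intro γ hγ hεγ
      exact hmin γ ⟨hγ μ (Or.inl rfl), hγ ν (Or.inr rfl)⟩ hεγ
  · rintro ⟨h1, h2⟩
    refine ⟨⟨h1 μ (Or.inl rfl), h1 ν (Or.inr rfl)⟩, ?_⟩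
    intro γ hγ hεγ
    refine h2 γ ?_ hεγ
    rintro a (rfl | rfl)
    · exact hγ.1
    · exact hγ.2

theorem pMinCE_finite (hfa : FinitelyAligned C) (μ ν : Λ) :
    (pMinCE C μ ν).Finite := by
  refine (minIn_finite (FTU_inter hfa (FTU_pTail C μ) (FTU_pTail C ν))).subset ?_
  intro ε hε
  exact isMinIn_iff_pMinCE.2 hε

theorem pShift_pMinCE_finite (hfa : FinitelyAligned C) (μ ν : Λ) :
    (pShift C μ (pMinCE C μ ν)).Finite := by
  apply Set.Finite.of_finite_image (f := fun β => C.comp μ β)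
  · refine (pMinCE_finite hfa μ ν).subset ?_
    rintro x ⟨β, ⟨hβr, hβm⟩, rfl⟩
    exact hβm
  · rintro β ⟨hβr, -⟩ β' ⟨hβ'r, -⟩ hEq
    exact C.left_cancel hβr hβ'r hEq

end CatPathsAux

open CatPathsAux

/-- Lemma 8.14. For `μ ≠ ν` with `s(μ) = s(ν)` and
`r(μ) = r(ν)`, the following are equivalent: (a) `(μ,ν)` is a generalized
cycle; (b) `σ^μ(μ ∨ ν)` is exhaustive; (c) `μ∂Λ ⊆ ν∂Λ`. -/
theorem statement18 {Λ : Type u} [Countable Λ] (C : CategoryOfPaths Λ)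
    (hfa : FinitelyAligned C) (μ ν : Λ) (hne : μ ≠ ν)
    (hs : C.s μ = C.s ν) (hr : C.r μ = C.r ν) :
    ((∀ τ : Λ, C.s μ = C.r τ → pMeets C (C.comp μ τ) ν) ↔
      ExhaustiveAt C (C.s μ) (pShift C μ (pMinCE C μ ν))) ∧
    (ExhaustiveAt C (C.s μ) (pShift C μ (pMinCE C μ ν)) ↔
      {y : Set Λ | ∃ (x : Set Λ) (hx : x ∈ lamStar C (C.s μ)),
          (Sigma.mk (⟨C.s μ, C.r_s μ⟩ : Vertex C) (⟨x, hx⟩ : Xv C (C.s μ)) : Xtotal C)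
              ∈ boundarySet C ∧ y = pMulStar C μ x} ⊆
        {y : Set Λ | ∃ (x : Set Λ) (hx : x ∈ lamStar C (C.s ν)),
          (Sigma.mk (⟨C.s ν, C.r_s ν⟩ : Vertex C) (⟨x, hx⟩ : Xv C (C.s ν)) : Xtotal C)
              ∈ boundarySet C ∧ y = pMulStar C ν x}) := by
  classical
  have hv : C.r (C.s μ) = C.s μ := C.r_s μ
  constructor
  · -- (a) ↔ (b)
    constructor
    · intro ha α hα
      obtain ⟨δ, hδ1, hδ2⟩ := ha α hα.symm
      have hδμ : δ ∈ pTail C μ := pTail_trans (comp_mem_pTail hα.symm) hδ1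
      obtain ⟨ε, hεmin, hδε⟩ := exists_min_below
        (FTU_inter hfa (FTU_pTail C μ) (FTU_pTail C ν)) ⟨hδμ, hδ2⟩
      obtain ⟨β, hβr, hεeq⟩ := hεmin.1.1
      refine ⟨β, ⟨hβr, by rw [← hεeq]; exact isMinIn_iff_pMinCE.1 hεmin⟩, ?_⟩
      rw [hεeq] at hδε
      exact cancel_meet hα.symm hβr hδ1 hδε
    · intro hb τ hτ
      obtain ⟨β, ⟨hβr, hβm⟩, η, hητ, hηβ⟩ := hb τ hτ.symm
      have hημ : C.s μ = C.r η := by rw [r_eq_of_mem_pTail hητ]; exact hτ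
      refine ⟨C.comp μ η, (mem_pTail_comp_iff hημ hτ).2 hητ, ?_⟩
      exact pTail_trans (hβm.1 ν (Or.inr rfl)) ((mem_pTail_comp_iff hημ hβr).2 hηβ)
  constructor
  · -- (b) → (c)
    intro hb
    rintro y ⟨x, hx, hbd, rfl⟩
    have hFEx : FEsat C x := boundary_FEsat hfa hv hx hbd
    have hvx : C.s μ ∈ x := vertex_mem_lamStar hv hx
    have hFfin := pShift_pMinCE_finite hfa μ ν
    have hcomp : ∀ β ∈ pShift C μ (pMinCE C μ ν), C.s (C.s μ) = C.r β :=
      fun β hβ => by rw [C.s_s]; exact hβ.1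
    have hex2 : ExhaustiveAt C (C.s (C.s μ)) (pShift C μ (pMinCE C μ ν)) := by
      rw [C.s_s]; exact hb
    obtain ⟨β, hβF, hβx⟩ := hFEx (C.s μ) hvx _ hFfin hcomp hex2
    rw [comp_vertex hβF.1.symm] at hβx
    have hνz : ν ∈ pMulStar C μ x :=
      ⟨β, hβx, hβF.1, hβF.2.1 ν (Or.inr rfl)⟩
    have hz : pMulStar C μ x ∈ lamStar C (C.r ν) := by
      rw [← hr]; exact pMulStar_mem_lamStar hx
    have hx' : pShift C ν (pMulStar C μ x) ∈ lamStar C (C.s ν) :=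
      pShift_mem_lamStar hz hνz
    have hFE' : FEsat C (pShift C ν (pMulStar C μ x)) :=
      FEsat_pShift (FEsat_pMulStar hfa hFEx)
    exact ⟨_, hx', FE_mem_boundary hfa (C.r_s ν) hx' hFE',
      (pMulStar_pShift_eq hz hνz).symm⟩
  · -- (c) → (b)
    intro hc
    by_contra hnb
    rw [ExhaustiveAt] at hnb
    push_neg at hnb
    obtain ⟨τ, hτr, hτ⟩ := hnb
    have hdir0 : pDirected C {δ | τ ∈ pTail C δ} :=
      fun δ hδ δ' hδ' => ⟨τ, ⟨hδ, hδ'⟩, mem_pTail_self C τ⟩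
    have hrng0 : {δ | τ ∈ pTail C δ} ⊆ pRng C (C.s μ) := fun δ hδ =>
      show C.r δ = C.s μ by rw [← r_eq_of_mem_pTail hδ]; exact hτr
    obtain ⟨m, hm, hx₀m⟩ := exists_maximal_superset hdir0 hrng0
    have hτm : τ ∈ m := hx₀m (mem_pTail_self C τ)
    have hmls : m ∈ lamStar C (C.s μ) := maximal_mem_lamStar hv hm
    have hbd : (Sigma.mk (⟨C.s μ, C.r_s μ⟩ : Vertex C)
        (⟨m, hmls⟩ : Xv C (C.s μ)) : Xtotal C) ∈ boundarySet C := by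
      have hMm : (Sigma.mk (⟨C.s μ, C.r_s μ⟩ : Vertex C)
          (⟨m, hmls⟩ : Xv C (C.s μ)) : Xtotal C) ∈
          {p : Xtotal C | p.2.1 ∈ lamStarStar C p.1.1} := hm
      show (Sigma.mk (⟨C.s μ, C.r_s μ⟩ : Vertex C)
          (⟨m, hmls⟩ : Xv C (C.s μ)) : Xtotal C) ∈ @closure _ (XtotalTop C)
          {p : Xtotal C | p.2.1 ∈ lamStarStar C p.1.1}
      exact @subset_closure (Xtotal C) (XtotalTop C)
        {p : Xtotal C | p.2.1 ∈ lamStarStar C p.1.1} _ hMm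
    obtain ⟨x'', hx'', hbd'', heq⟩ := hc ⟨m, hmls, hbd, rfl⟩
    have hν : ν ∈ pMulStar C ν x'' := by
      obtain ⟨γ, hγ⟩ := hx''.1
      exact ⟨γ, hγ, (hx''.2.1 hγ).symm, comp_mem_pTail (hx''.2.1 hγ).symm⟩
    rw [← heq] at hν
    obtain ⟨γ, hγm, hγr, hγν⟩ := hν
    obtain ⟨ε, hεmin, hγε⟩ := exists_min_below
      (FTU_inter hfa (FTU_pTail C μ) (FTU_pTail C ν))
      ⟨comp_mem_pTail hγr, hγν⟩
    obtain ⟨β, hβr, hεeq⟩ := hεmin.1.1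
    have hβF : β ∈ pShift C μ (pMinCE C μ ν) :=
      ⟨hβr, by rw [← hεeq]; exact isMinIn_iff_pMinCE.1 hεmin⟩
    have hγβ : γ ∈ pTail C β := by
      rw [hεeq] at hγε
      exact (mem_pTail_comp_iff hγr hβr).1 hγε
    obtain ⟨ηq, ⟨hη1, hη2⟩, hη3⟩ := hm.2.1 γ hγm τ hτm
    exact hτ β hβF ⟨ηq, hη2, pTail_trans hγβ hη1⟩
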